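/- There exists Δt₀ > 0 such that for every step size Δt ∈ (0, Δt₀) the discrete-time linearized district heating grid system is stabilizable: there exists a matrix G ∈ ℝ^{m×n} (with n = |𝓗| + |𝒱| + |ℰ| and m = |𝓕| + |ℰ|) such that every complex eigenvalue λ of the matrix I_n + Δt·M̄⁻¹·(A_ss + E G) satisfies |λ| < 1, where A_ss ∈ ℝ^{n×n} is the block-diagonal matrix with blocks 0 ∈ ℝ^{𝓗×𝓗} and Ã(q̄_e) − diag(κ) ∈ ℝ^{(𝒱⊔ℰ)×(𝒱⊔ℰ)}, and E ∈ ℝ^{n×m} is the block matrix E = [[B_h Fᵀ, 0], [Â(T̄), [0; I_ℰ]]] whose first block row acts on the hot-storage-mass coordinates and whose second block row acts on the temperature coordinates. -/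

import Mathlib

open Matrix

/-- A positive constant strictly below finitely many positive values. -/
lemma exists_pos_lt_all {ι : Type*} [Fintype ι] (f : ι → ℝ) (hf : ∀ i, 0 < f i) :
    ∃ c : ℝ, 0 < c ∧ ∀ i, c < f i := by
  cases isEmpty_or_nonempty ι
  · exact ⟨1, one_pos, fun i => isEmptyElim i⟩
  · obtain ⟨i₀, -, hmin⟩ := Finset.exists_min_image Finset.univ f
      ⟨Classical.arbitrary ι, Finset.mem_univ _⟩
    exact ⟨f i₀ / 2, by have := hf i₀; linarith,
      fun i => lt_of_lt_of_le (half_lt_self (hf i₀)) (hmin i (Finset.mem_univ i))⟩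

lemma hasEigenvalue_of_isRoot_charpoly {n : Type*} [Fintype n] [DecidableEq n]
    (A : Matrix n n ℂ) (t : ℂ) (h : A.charpoly.IsRoot t) :
    Module.End.HasEigenvalue (Matrix.toLin' A) t := by
  have hmap : (charmatrix A).map (Polynomial.eval t) = Matrix.diagonal (fun _ => t) - A := by
    ext i j
    by_cases hij : i = j
    · subst hij
      simp [Matrix.charmatrix_apply_eq]
    · simp [Matrix.charmatrix_apply_ne _ _ _ hij, Matrix.diagonal_apply_ne _ hij]
  have hdet : (Matrix.diagonal (fun _ => t) - A).det = 0 := by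
    have h3 : Polynomial.eval t A.charpoly = 0 := h
    rw [Matrix.charpoly] at h3
    rw [← hmap]
    calc ((charmatrix A).map (Polynomial.eval t)).det
        = ((Polynomial.evalRingHom t).mapMatrix (charmatrix A)).det := rfl
      _ = Polynomial.eval t (charmatrix A).det := (RingHom.map_det _ _).symm
      _ = 0 := h3
  obtain ⟨v, hv0, hv⟩ := (Matrix.exists_mulVec_eq_zero_iff).mpr hdet
  have hAv : A *ᵥ v = t • v := by
    funext i
    have := congrFun hv i
    simp only [Matrix.sub_mulVec, Pi.sub_apply, Pi.zero_apply, sub_eq_zero] at this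
    rw [Pi.smul_apply, smul_eq_mul, ← this, Matrix.mulVec_diagonal]
  exact Module.End.hasEigenvalue_of_hasEigenvector
    ⟨Module.End.mem_eigenspace_iff.mpr (by rw [Matrix.toLin'_apply, hAv]), hv0⟩

/-- Generic Gershgorin stabilization step: if `A` is strictly row diagonally dominant
with negative diagonal and `μ` is positive, then for all small `Δt` the eigenvalues of
`1 + Δt • ((diagonal μ)⁻¹ * A)` are in the open unit disc. -/
lemma gersh_step {n : Type*} [Fintype n] [DecidableEq n] (A : Matrix n n ℝ) (μ : n → ℝ)
    (hμ : ∀ i, 0 < μ i)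
    (hdom : ∀ i, ∑ j ∈ Finset.univ.erase i, |A i j| < -(A i i)) :
    ∃ Δt₀ > (0 : ℝ), ∀ Δt : ℝ, 0 < Δt → Δt < Δt₀ →
      ∀ lam : ℂ,
        ((((1 : Matrix n n ℝ) + Δt • ((Matrix.diagonal μ)⁻¹ * A)).map
            Complex.ofReal).charpoly).IsRoot lam → ‖lam‖ < 1 := by
  have hdiagneg : ∀ i, A i i < 0 := by
    intro i
    have h0 : (0:ℝ) ≤ ∑ j ∈ Finset.univ.erase i, |A i j| :=
      Finset.sum_nonneg fun j _ => abs_nonneg _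
    nlinarith [hdom i]
  have hinv : (Matrix.diagonal μ)⁻¹ = Matrix.diagonal fun i => (μ i)⁻¹ := by
    apply Matrix.inv_eq_right_inv
    rw [Matrix.diagonal_mul_diagonal]
    have : (fun i => μ i * (μ i)⁻¹) = fun _ => (1:ℝ) := by
      funext i; exact mul_inv_cancel₀ (hμ i).ne'
    rw [this, Matrix.diagonal_one]
  obtain ⟨Δt₀, hΔt₀, hΔ⟩ := exists_pos_lt_all (fun i => μ i / (-(A i i)))
    (fun i => div_pos (hμ i) (neg_pos.mpr (hdiagneg i)))
  refine ⟨Δt₀, hΔt₀, fun Δt h0 h1 lam hroot => ?_⟩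
  set W : Matrix n n ℝ := (1 : Matrix n n ℝ) + Δt • ((Matrix.diagonal μ)⁻¹ * A) with hWdef
  have hW : ∀ i j, W i j = (if i = j then 1 else 0) + Δt * ((μ i)⁻¹ * A i j) := by
    intro i j
    simp [hWdef, hinv, Matrix.diagonal_mul, Matrix.one_apply, Matrix.add_apply, smul_eq_mul]
  obtain ⟨k, hk⟩ := eigenvalue_mem_ball (hasEigenvalue_of_isRoot_charpoly _ _ hroot)
  rw [Metric.mem_closedBall] at hk
  have hnorm : ∀ i j, ‖(W.map Complex.ofReal) i j‖ = |W i j| := by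
    intro i j
    simp [Matrix.map_apply, Complex.norm_real]
  have hdist : ‖lam - (W k k : ℝ)‖ ≤ ∑ j ∈ Finset.univ.erase k, |W k j| := by
    have h1 : dist lam ((W.map Complex.ofReal) k k) = ‖lam - (W k k : ℝ)‖ :=
      Complex.dist_eq _ _
    calc ‖lam - (W k k : ℝ)‖ = dist lam ((W.map Complex.ofReal) k k) := h1.symm
    _ ≤ ∑ j ∈ Finset.univ.erase k, ‖(W.map Complex.ofReal) k j‖ := hk
    _ = ∑ j ∈ Finset.univ.erase k, |W k j| := Finset.sum_congr rfl fun j _ => hnorm k j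
  -- bound the off-diagonal sum
  have hoff : ∑ j ∈ Finset.univ.erase k, |W k j|
      = Δt * (μ k)⁻¹ * ∑ j ∈ Finset.univ.erase k, |A k j| := by
    rw [Finset.mul_sum]
    refine Finset.sum_congr rfl fun j hj => ?_
    have hjk : j ≠ k := Finset.ne_of_mem_erase hj
    rw [hW k j, if_neg (Ne.symm hjk), zero_add, abs_mul, abs_mul,
      abs_of_pos h0, abs_of_pos (inv_pos.mpr (hμ k))]
    ring
  have hμk : 0 < (μ k)⁻¹ := inv_pos.mpr (hμ k)
  have hdk : Δt * ((μ k)⁻¹ * (-(A k k))) < 1 := by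
    have hA : 0 < -(A k k) := neg_pos.mpr (hdiagneg k)
    have hk' : Δt < μ k / (-(A k k)) := lt_trans h1 (hΔ k)
    rw [lt_div_iff₀ hA] at hk'
    calc Δt * ((μ k)⁻¹ * (-(A k k))) = Δt * (-(A k k)) * (μ k)⁻¹ := by ring
      _ < μ k * (μ k)⁻¹ := mul_lt_mul_of_pos_right hk' hμk
      _ = 1 := mul_inv_cancel₀ (hμ k).ne'
  have hWkk : W k k = 1 + Δt * ((μ k)⁻¹ * A k k) := by rw [hW k k, if_pos rfl]
  have e2 : Δt * ((μ k)⁻¹ * A k k) = -(Δt * ((μ k)⁻¹ * (-(A k k)))) := by ring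
  have hWkkpos : 0 < W k k := by rw [hWkk, e2]; linarith
  have habs : ‖lam‖ ≤ W k k + ∑ j ∈ Finset.univ.erase k, |W k j| := by
    calc ‖lam‖ = ‖(lam - (W k k : ℝ)) + (W k k : ℝ)‖ := by rw [sub_add_cancel]
    _ ≤ ‖lam - (W k k : ℝ)‖ + ‖((W k k : ℝ) : ℂ)‖ := norm_add_le _ _
    _ ≤ ∑ j ∈ Finset.univ.erase k, |W k j| + W k k := by
        refine add_le_add hdist ?_
        rw [Complex.norm_real, Real.norm_eq_abs, abs_of_pos hWkkpos]
    _ = W k k + ∑ j ∈ Finset.univ.erase k, |W k j| := by ring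
  have : W k k + ∑ j ∈ Finset.univ.erase k, |W k j| < 1 := by
    rw [hWkk, hoff, e2]
    have hpos : 0 < Δt * (μ k)⁻¹ := mul_pos h0 hμk
    have h2 : Δt * (μ k)⁻¹ * (∑ j ∈ Finset.univ.erase k, |A k j|)
        < Δt * (μ k)⁻¹ * (-(A k k)) := mul_lt_mul_of_pos_left (hdom k) hpos
    have e3 : Δt * ((μ k)⁻¹ * (-(A k k))) = Δt * (μ k)⁻¹ * (-(A k k)) := by ring
    rw [e3]
    linarith
  exact lt_of_le_of_lt habs this

open Matrix

/-- `B` is an incidence matrix: every column contains exactly one entry `+1`,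
exactly one entry `-1`, and all other entries zero. -/
def IsIncidence {V E : Type*} (B : Matrix V E ℝ) : Prop :=
  ∀ e : E, ∃ v w : V, v ≠ w ∧ B v e = 1 ∧ B w e = -1 ∧
    ∀ u : V, u ≠ v → u ≠ w → B u e = 0

/-- The thermal coupling matrix Ã(q) of a district heating grid at mass flows `q`,
built from `B₊ = (|B| + B)/2` and `B₋ = (|B| - B)/2`. -/
noncomputable def Atil {V E : Type*} [Fintype E] [DecidableEq V] [DecidableEq E]
    (B : Matrix V E ℝ) (q : E → ℝ) : Matrix (V ⊕ E) (V ⊕ E) ℝ :=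
  let Bp : Matrix V E ℝ := Matrix.of fun v e => (|B v e| + B v e) / 2
  let Bm : Matrix V E ℝ := Matrix.of fun v e => (|B v e| - B v e) / 2
  Matrix.fromBlocks (-(Matrix.diagonal (Bp *ᵥ q))) (Bp * Matrix.diagonal q)
    (Matrix.diagonal q * Bmᵀ) (-(Matrix.diagonal q))

/-- The matrix Â(T̄) ∈ ℝ^{(𝒱⊔ℰ)×𝓕} whose `i`-th column is `Ã(Fᵀ eᵢ) T̄`. -/
noncomputable def Ahat {V E C : Type*} [Fintype E] [Fintype V] [Fintype C]
    [DecidableEq V] [DecidableEq E] [DecidableEq C]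
    (B : Matrix V E ℝ) (F : Matrix C E ℝ) (T : V ⊕ E → ℝ) :
    Matrix (V ⊕ E) C ℝ :=
  Matrix.of fun ve i => (Atil B (Fᵀ *ᵥ Pi.single i 1) *ᵥ T) ve

/-- Stabilizability of the Euler-discretized linearized district heating grid:
there is `Δt₀ > 0` such that for every step size `Δt ∈ (0, Δt₀)` there is a feedback
matrix `G` making all complex eigenvalues of `I + Δt ⬝ M̄⁻¹ (A_ss + E G)` lie in the
open unit disc. -/
theorem dhg_linearization_stabilizable
    {H V E C : Type*} [Fintype H] [Fintype V] [Fintype E] [Fintype C]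
    [DecidableEq H] [DecidableEq V] [DecidableEq E] [DecidableEq C]
    (B : Matrix V E ℝ) (hB : IsIncidence B)
    -- B_h is the submatrix of B consisting of the rows indexed by the hot layers
    (emb : H → V) (hemb : Function.Injective emb)
    (F : Matrix C E ℝ) (hF : ∀ i e, F i e = -1 ∨ F i e = 0 ∨ F i e = 1)
    -- ker (F B_hᵀ) = {0}
    (hker : ∀ z : H → ℝ, (F * (B.submatrix emb id)ᵀ) *ᵥ z = 0 → z = 0)
    -- steady-state chord flows with nonnegative balanced edge flows q̄_e = Fᵀ q̄_c
    (qc : C → ℝ) (hq : ∀ e, 0 ≤ (Fᵀ *ᵥ qc) e) (hbal : B *ᵥ (Fᵀ *ᵥ qc) = 0)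
    -- steady temperatures, strictly positive heat-loss coefficients and masses
    (T : V ⊕ E → ℝ) (κ : V ⊕ E → ℝ) (hκ : ∀ i, 0 < κ i)
    (μ : H ⊕ (V ⊕ E) → ℝ) (hμ : ∀ i, 0 < μ i) :
    ∃ Δt₀ > (0 : ℝ), ∀ Δt : ℝ, 0 < Δt → Δt < Δt₀ →
      ∃ G : Matrix (C ⊕ E) (H ⊕ (V ⊕ E)) ℝ,
        ∀ lam : ℂ,
          ((((1 : Matrix (H ⊕ (V ⊕ E)) (H ⊕ (V ⊕ E)) ℝ) +
              Δt • ((Matrix.diagonal μ)⁻¹ *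
                (Matrix.fromBlocks 0 0 0 (Atil B (Fᵀ *ᵥ qc) - Matrix.diagonal κ) +
                  Matrix.fromBlocks ((B.submatrix emb id) * Fᵀ) 0
                    (Ahat B F T) (Matrix.fromRows 0 1) * G))).map
              Complex.ofReal).charpoly).IsRoot lam → ‖lam‖ < 1 := by
  classical
  set q : E → ℝ := Fᵀ *ᵥ qc with hqdef
  set P : Matrix H C ℝ := (B.submatrix emb id) * Fᵀ with hPdef
  -- `Pᵀ` has trivial kernel
  have hPt : ∀ z : H → ℝ, Pᵀ *ᵥ z = 0 → z = 0 := by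
    intro z hz
    apply hker
    rwa [hPdef, Matrix.transpose_mul] at hz
  -- hence `P * Pᵀ` is invertible
  have hMinj : Function.Injective ((P * Pᵀ).mulVec) := by
    have hker0 : ∀ z, (P * Pᵀ) *ᵥ z = 0 → z = 0 := by
      intro z hz
      apply hPt
      apply dotProduct_self_eq_zero.mp
      calc (Pᵀ *ᵥ z) ⬝ᵥ (Pᵀ *ᵥ z) = (z ᵥ* P) ⬝ᵥ (Pᵀ *ᵥ z) := by rw [Matrix.mulVec_transpose]
        _ = z ⬝ᵥ (P *ᵥ (Pᵀ *ᵥ z)) := (Matrix.dotProduct_mulVec _ _ _).symm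
        _ = z ⬝ᵥ ((P * Pᵀ) *ᵥ z) := by rw [Matrix.mulVec_mulVec]
        _ = 0 := by rw [hz, dotProduct_zero]
    intro x y hxy
    have h0 : (P * Pᵀ) *ᵥ (x - y) = 0 := by
      rw [Matrix.mulVec_sub, hxy, sub_self]
    exact sub_eq_zero.mp (hker0 _ h0)
  have hdetU : IsUnit (P * Pᵀ).det :=
    (Matrix.isUnit_iff_isUnit_det _).mp (Matrix.mulVec_injective_iff_isUnit.mp hMinj)
  set R : Matrix C H ℝ := Pᵀ * (P * Pᵀ)⁻¹ with hRdef
  have hPR : P * R = 1 := by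
    rw [hRdef, ← Matrix.mul_assoc, Matrix.mul_nonsing_inv _ hdetU]
  set Z : Matrix (V ⊕ E) H ℝ := Ahat B F T * R with hZdef
  set s : V → ℝ := fun v => ∑ h : H, |Z (Sum.inl v) h| with hsdef
  have hs0 : ∀ v, 0 ≤ s v := fun v => Finset.sum_nonneg fun h _ => abs_nonneg _
  obtain ⟨c, hc0, hc⟩ := exists_pos_lt_all (fun v : V => κ (Sum.inl v) / (s v + 1))
    (fun v => div_pos (hκ _) (by linarith [hs0 v]))
  have hcs : ∀ v : V, c * s v < κ (Sum.inl v) := by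
    intro v
    have h1 : c * (s v + 1) < κ (Sum.inl v) := by
      have h2 := hc v
      rwa [lt_div_iff₀ (by linarith [hs0 v] : (0:ℝ) < s v + 1)] at h2
    nlinarith
  set G21 : Matrix E H ℝ := Matrix.of fun e h => c * Z (Sum.inr e) h with hG21def
  set G : Matrix (C ⊕ E) (H ⊕ (V ⊕ E)) ℝ := Matrix.fromBlocks ((-c) • R) 0 G21 0 with hGdef
  set S : Matrix (V ⊕ E) (V ⊕ E) ℝ := Atil B q - Matrix.diagonal κ with hSdef
  set Acl : Matrix (H ⊕ (V ⊕ E)) (H ⊕ (V ⊕ E)) ℝ :=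
    Matrix.fromBlocks 0 0 0 S +
      Matrix.fromBlocks P 0 (Ahat B F T) (Matrix.fromRows 0 1) * G with hAcldef
  -- block description of the closed loop
  have hblock : Acl = Matrix.fromBlocks ((-c) • (1 : Matrix H H ℝ)) 0
      (((-c) • Z) + Matrix.fromRows 0 G21) S := by
    rw [hAcldef, hGdef]; erw [Matrix.fromBlocks_multiply]; rw [Matrix.fromBlocks_add,
      Matrix.mul_smul, hPR, Matrix.mul_smul, Matrix.fromRows_mul, ← hZdef]
    simp
  -- local Bp / Bm
  set Bp : Matrix V E ℝ := Matrix.of fun v e => (|B v e| + B v e) / 2 with hBpdef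
  set Bm : Matrix V E ℝ := Matrix.of fun v e => (|B v e| - B v e) / 2 with hBmdef
  have hAtil : Atil B q = Matrix.fromBlocks (-(Matrix.diagonal (Bp *ᵥ q)))
      (Bp * Matrix.diagonal q) (Matrix.diagonal q * Bmᵀ) (-(Matrix.diagonal q)) := rfl
  have hBp0 : ∀ v e, 0 ≤ Bp v e := by
    intro v e
    rw [hBpdef]
    have := neg_abs_le (B v e)
    simp only [Matrix.of_apply]
    linarith
  have hBm0 : ∀ v e, 0 ≤ Bm v e := by
    intro v e
    rw [hBmdef]
    have := le_abs_self (B v e)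
    simp only [Matrix.of_apply]
    linarith
  have hBpq : ∀ v, 0 ≤ (Bp *ᵥ q) v := fun v =>
    Finset.sum_nonneg fun e _ => mul_nonneg (hBp0 v e) (hq e)
  have hBm_col : ∀ e : E, ∑ v : V, Bm v e = 1 := by
    intro e
    obtain ⟨v, w, hvw, h1, h2, h0⟩ := hB e
    rw [Finset.sum_eq_single w]
    · rw [hBmdef]; simp [h2]
    · intro u _ hu
      by_cases huv : u = v
      · subst huv; rw [hBmdef]; simp [h1]
      · rw [hBmdef]; simp [h0 u huv hu]
    · intro h; exact absurd (Finset.mem_univ w) h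
  -- entries of S
  have hS11 : ∀ v w, S (Sum.inl v) (Sum.inl w) =
      if v = w then -((Bp *ᵥ q) v) - κ (Sum.inl v) else 0 := by
    intro v w
    rw [hSdef, hAtil, Matrix.sub_apply, Matrix.fromBlocks_apply₁₁]
    by_cases hvw : v = w
    · subst hvw; simp [Matrix.diagonal_apply_eq]
    · simp [Matrix.diagonal_apply_ne _ hvw, hvw,
        Matrix.diagonal_apply_ne κ (show Sum.inl v ≠ Sum.inl w by simpa using hvw)]
  have hS12 : ∀ v e, S (Sum.inl v) (Sum.inr e) = Bp v e * q e := by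
    intro v e
    rw [hSdef, hAtil, Matrix.sub_apply, Matrix.fromBlocks_apply₁₂, Matrix.mul_diagonal,
      Matrix.diagonal_apply_ne κ (by simp)]
    ring
  have hS21 : ∀ e v, S (Sum.inr e) (Sum.inl v) = q e * Bm v e := by
    intro e v
    rw [hSdef, hAtil, Matrix.sub_apply, Matrix.fromBlocks_apply₂₁, Matrix.diagonal_mul,
      Matrix.diagonal_apply_ne κ (by simp), Matrix.transpose_apply]
    ring
  have hS22 : ∀ e e', S (Sum.inr e) (Sum.inr e') =
      if e = e' then -(q e) - κ (Sum.inr e) else 0 := by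
    intro e e'
    rw [hSdef, hAtil, Matrix.sub_apply, Matrix.fromBlocks_apply₂₂]
    by_cases hee : e = e'
    · subst hee; simp [Matrix.diagonal_apply_eq]
    · simp [Matrix.diagonal_apply_ne _ hee, hee,
        Matrix.diagonal_apply_ne κ (show Sum.inr e ≠ Sum.inr e' by simpa using hee)]
  -- entries of Acl
  have hA11 : ∀ h h', Acl (Sum.inl h) (Sum.inl h') = if h = h' then -c else 0 := by
    intro h h'
    rw [hblock, Matrix.fromBlocks_apply₁₁, Matrix.smul_apply, Matrix.one_apply]
    by_cases hh : h = h' <;> simp [hh]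
  have hA12 : ∀ h ve, Acl (Sum.inl h) (Sum.inr ve) = 0 := by
    intro h ve
    rw [hblock, Matrix.fromBlocks_apply₁₂]
    rfl
  have hA21v : ∀ v h, Acl (Sum.inr (Sum.inl v)) (Sum.inl h) = -(c * Z (Sum.inl v) h) := by
    intro v h
    rw [hblock, Matrix.fromBlocks_apply₂₁, Matrix.add_apply, Matrix.smul_apply,
      Matrix.fromRows_apply_inl]
    simp
  have hA21e : ∀ e h, Acl (Sum.inr (Sum.inr e)) (Sum.inl h) = 0 := by
    intro e h
    rw [hblock, Matrix.fromBlocks_apply₂₁, Matrix.add_apply, Matrix.smul_apply,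
      Matrix.fromRows_apply_inr, hG21def]
    simp
  have hA22 : ∀ ve ve', Acl (Sum.inr ve) (Sum.inr ve') = S ve ve' := by
    intro ve ve'
    rw [hblock, Matrix.fromBlocks_apply₂₂]
  -- strict row diagonal dominance with negative diagonal
  have hdom : ∀ i, ∑ j ∈ Finset.univ.erase i, |Acl i j| < -(Acl i i) := by
    intro i
    rw [Finset.sum_erase_eq_sub (Finset.mem_univ i)]
    rcases i with h | ve
    · -- hot storage rows
      have hsum : ∑ j : H ⊕ (V ⊕ E), |Acl (Sum.inl h) j| = c := by
        rw [Fintype.sum_sum_type]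
        have e1 : ∑ h' : H, |Acl (Sum.inl h) (Sum.inl h')| = c := by
          have : ∀ h', |Acl (Sum.inl h) (Sum.inl h')| = if h = h' then c else 0 := by
            intro h'
            rw [hA11]
            by_cases hh : h = h' <;> simp [hh, abs_of_pos hc0]
          simp only [this]
          simp
        have e2 : ∑ ve : V ⊕ E, |Acl (Sum.inl h) (Sum.inr ve)| = 0 := by
          simp [hA12]
        rw [e1, e2, add_zero]
      rw [hsum, hA11, if_pos rfl, abs_neg, abs_of_pos hc0]
      linarith
    · rcases ve with v | e
      · -- vertex temperature rows
        have e1 : ∑ h : H, |Acl (Sum.inr (Sum.inl v)) (Sum.inl h)| = c * s v := by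
          rw [hsdef, Finset.mul_sum]
          refine Finset.sum_congr rfl fun h _ => ?_
          rw [hA21v, abs_neg, abs_mul, abs_of_pos hc0]
        have e2 : ∑ w : V, |S (Sum.inl v) (Sum.inl w)| = (Bp *ᵥ q) v + κ (Sum.inl v) := by
          rw [Finset.sum_eq_single v]
          · rw [hS11, if_pos rfl]
            have h1 : -((Bp *ᵥ q) v) - κ (Sum.inl v) = -((Bp *ᵥ q) v + κ (Sum.inl v)) := by ring
            rw [h1, abs_neg, abs_of_nonneg (by linarith [hBpq v, hκ (Sum.inl v)])]
          · intro w _ hw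
            rw [hS11, if_neg (Ne.symm hw), abs_zero]
          · intro h; exact absurd (Finset.mem_univ v) h
        have e3 : ∑ e : E, |S (Sum.inl v) (Sum.inr e)| = (Bp *ᵥ q) v := by
          have h1 : ∀ e, |S (Sum.inl v) (Sum.inr e)| = Bp v e * q e := by
            intro e
            rw [hS12, abs_of_nonneg (mul_nonneg (hBp0 v e) (hq e))]
          simp only [h1]
          rfl
        have hsum : ∑ j : H ⊕ (V ⊕ E), |Acl (Sum.inr (Sum.inl v)) j|
            = c * s v + ((Bp *ᵥ q) v + κ (Sum.inl v) + (Bp *ᵥ q) v) := by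
          rw [Fintype.sum_sum_type, e1, Fintype.sum_sum_type]
          simp only [hA22]
          rw [e2, e3]
          try ring
        rw [hsum, hA22, hS11, if_pos rfl]
        have h1 : -((Bp *ᵥ q) v) - κ (Sum.inl v) = -((Bp *ᵥ q) v + κ (Sum.inl v)) := by ring
        rw [h1, abs_neg, abs_of_nonneg (by linarith [hBpq v, hκ (Sum.inl v)])]
        have := hcs v
        linarith
      · -- edge temperature rows
        have e1 : ∑ h : H, |Acl (Sum.inr (Sum.inr e)) (Sum.inl h)| = 0 := by
          simp [hA21e]
        have e2 : ∑ w : V, |S (Sum.inr e) (Sum.inl w)| = q e := by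
          have h1 : ∀ w, |S (Sum.inr e) (Sum.inl w)| = q e * Bm w e := by
            intro w
            rw [hS21, abs_of_nonneg (mul_nonneg (hq e) (hBm0 w e))]
          simp only [h1]
          rw [← Finset.mul_sum, hBm_col, mul_one]
        have e3 : ∑ e' : E, |S (Sum.inr e) (Sum.inr e')| = q e + κ (Sum.inr e) := by
          rw [Finset.sum_eq_single e]
          · rw [hS22, if_pos rfl]
            have h1 : -(q e) - κ (Sum.inr e) = -(q e + κ (Sum.inr e)) := by ring
            rw [h1, abs_neg, abs_of_nonneg (by linarith [hq e, hκ (Sum.inr e)])]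
          · intro e' _ he'
            rw [hS22, if_neg (Ne.symm he'), abs_zero]
          · intro h; exact absurd (Finset.mem_univ e) h
        have hsum : ∑ j : H ⊕ (V ⊕ E), |Acl (Sum.inr (Sum.inr e)) j|
            = q e + (q e + κ (Sum.inr e)) := by
          rw [Fintype.sum_sum_type, e1, Fintype.sum_sum_type]
          simp only [hA22]
          rw [e2, e3]
          try ring
        rw [hsum, hA22, hS22, if_pos rfl]
        have h1 : -(q e) - κ (Sum.inr e) = -(q e + κ (Sum.inr e)) := by ring
        rw [h1, abs_neg, abs_of_nonneg (by linarith [hq e, hκ (Sum.inr e)])]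
        have := hκ (Sum.inr e)
        linarith
  obtain ⟨Δt₀, hΔt₀, hmain⟩ := gersh_step Acl μ hμ hdom
  exact ⟨Δt₀, hΔt₀, fun Δt h0 h1 => ⟨G, fun lam hroot => hmain Δt h0 h1 lam hroot⟩⟩
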